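/- Let F be a linearly ordered field with integer part I, let ρ ∈ F be rational with ρ ≥ 1, and let m ∈ I^{>0} be such that mρ ∈ I. If α ∈ F satisfies 0 < α − ρ < 1/m², then ⌊lα⌋ = ⌊lρ⌋ for every l ∈ I with 0 ≤ l ≤ m; in particular N_ρ and N_α contain the same elements below m. (This is the quantitative core of the theorem asserting that for any descending sequence of irrationals converging to ρ, the sets N_{α_γ} eventually agree with N_ρ on any prescribed initial segment.) -/

import Mathlib

/-- An element of `F` is rational (with respect to `I`) if it lies in the
fraction field of `I` viewed inside `F`. -/
def IsRat {F : Type*} [Field F] [LinearOrder F] [IsStrictOrderedRing F] (I : Subring F) (α : F) : Prop :=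
  ∃ p ∈ I, ∃ q ∈ I, q ≠ 0 ∧ α = p / q

theorem stmt_12 {F : Type*} [Field F] [LinearOrder F] [IsStrictOrderedRing F] (I : Subring F) (fl : F → F)
    (hdisc : ∀ x ∈ I, ¬(0 < x ∧ x < 1))
    (hfl : ∀ x : F, fl x ∈ I ∧ fl x ≤ x ∧ x < fl x + 1)
    (ρ : F) (hρrat : IsRat I ρ) (hρ1 : 1 ≤ ρ)
    (m : F) (hm : m ∈ I) (hm0 : 0 < m) (hmρ : m * ρ ∈ I)
    (α : F) (h1 : 0 < α - ρ) (h2 : α - ρ < 1 / m ^ 2) :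
    ∀ l ∈ I, 0 ≤ l → l ≤ m → fl (l * α) = fl (l * ρ) := by
  intro l hl hl0 hlm
  obtain ⟨ha, ha1, ha2⟩ := hfl (l * α)
  obtain ⟨hb, hb1, hb2⟩ := hfl (l * ρ)
  have hk : m * (l * ρ) - m * fl (l * ρ) ∈ I := by
    have h : m * (l * ρ) = l * (m * ρ) := by ring
    rw [h]
    exact I.sub_mem (I.mul_mem hl hmρ) (I.mul_mem hm hb)
  have hkle : m * (l * ρ) - m * fl (l * ρ) ≤ m - 1 := by
    by_contra h
    push_neg at h
    have h5 : m * (l * ρ) - m * fl (l * ρ) < m := by nlinarith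
    exact hdisc _ (I.sub_mem hk (I.sub_mem hm I.one_mem)) ⟨by linarith, by linarith⟩
  have h6 : l * (α - ρ) ≤ m * (α - ρ) := by nlinarith
  have h7 : m * (α - ρ) * m < 1 := by
    have h2' : (α - ρ) * m ^ 2 < 1 := by
      have hmsq : (0:F) < m ^ 2 := by positivity
      calc (α - ρ) * m ^ 2 < (1 / m ^ 2) * m ^ 2 := by nlinarith
        _ = 1 := by field_simp
    nlinarith
  have hbound : l * α < fl (l * ρ) + 1 := by nlinarith
  have hge : fl (l * ρ) ≤ l * α := le_trans hb1 (by nlinarith)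
  have hd1 : fl (l * α) - fl (l * ρ) ∈ I := I.sub_mem ha hb
  have hd2 : fl (l * ρ) - fl (l * α) ∈ I := I.sub_mem hb ha
  have hlt1 : fl (l * α) - fl (l * ρ) < 1 := by linarith
  have hlt2 : fl (l * ρ) - fl (l * α) < 1 := by linarith
  by_contra hne
  rcases lt_or_gt_of_ne (sub_ne_zero.mpr hne) with hc | hc
  · exact hdisc _ hd2 ⟨by linarith, hlt2⟩
  · exact hdisc _ hd1 ⟨by linarith, hlt1⟩
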